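/- If (A₁, B₁) and (A₂, B₂) are pairs of Gram mates, then the block diagonal matrices diag(A₁, A₂) and diag(B₁, B₂) are Gram mates, and the matrices [[A₁, J],[J, A₂]] and [[B₁, J],[J, B₂]] (with all-ones off-diagonal blocks of appropriate sizes) are Gram mates. -/

import Mathlib

open Matrix

lemma rowsum_eq {m n : ℕ} (A B : Matrix (Fin m) (Fin n) ℝ)
    (hA : ∀ i j, A i j = 0 ∨ A i j = 1) (hB : ∀ i j, B i j = 0 ∨ B i j = 1)
    (h : A * Aᵀ = B * Bᵀ) (i : Fin m) : ∑ j, A i j = ∑ j, B i j := by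
  have := congrFun (congrFun h i) i
  simp only [mul_apply, transpose_apply] at this
  calc ∑ j, A i j = ∑ j, A i j * A i j := by
        refine Finset.sum_congr rfl fun j _ => ?_
        rcases hA i j with h' | h' <;> simp [h']
    _ = ∑ j, B i j * B i j := this
    _ = ∑ j, B i j := by
        refine Finset.sum_congr rfl fun j _ => ?_
        rcases hB i j with h' | h' <;> simp [h']

lemma mul_ones_eq {m n p : ℕ} (A B : Matrix (Fin m) (Fin n) ℝ)
    (hA : ∀ i j, A i j = 0 ∨ A i j = 1) (hB : ∀ i j, B i j = 0 ∨ B i j = 1)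
    (h : A * Aᵀ = B * Bᵀ) :
    A * (Matrix.of fun _ _ => (1:ℝ) : Matrix (Fin n) (Fin p) ℝ)
      = B * (Matrix.of fun _ _ => (1:ℝ)) := by
  ext i k
  simp only [mul_apply, of_apply, mul_one]
  exact (rowsum_eq A B hA hB h i).trans (Finset.sum_congr rfl fun _ _ => (mul_one _).symm)

lemma ones_mul_eq {m n p : ℕ} (A B : Matrix (Fin m) (Fin n) ℝ)
    (hA : ∀ i j, A i j = 0 ∨ A i j = 1) (hB : ∀ i j, B i j = 0 ∨ B i j = 1)
    (h : A * Aᵀ = B * Bᵀ) :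
    (Matrix.of fun _ _ => (1:ℝ) : Matrix (Fin p) (Fin n) ℝ) * Aᵀ
      = (Matrix.of fun _ _ => (1:ℝ)) * Bᵀ := by
  ext k i
  simp only [mul_apply, of_apply, one_mul, transpose_apply]
  exact (rowsum_eq A B hA hB h i).trans (Finset.sum_congr rfl fun _ _ => (one_mul _).symm)

lemma ones_mul_eq' {m n p : ℕ} (A B : Matrix (Fin m) (Fin n) ℝ)
    (hA : ∀ i j, A i j = 0 ∨ A i j = 1) (hB : ∀ i j, B i j = 0 ∨ B i j = 1)
    (h : Aᵀ * A = Bᵀ * B) :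
    (Matrix.of fun _ _ => (1:ℝ) : Matrix (Fin p) (Fin m) ℝ) * A
      = (Matrix.of fun _ _ => (1:ℝ)) * B := by
  ext k j
  simp only [mul_apply, of_apply, one_mul]
  have := rowsum_eq Aᵀ Bᵀ (fun i j => hA j i) (fun i j => hB j i)
    (by simpa using h) j
  exact this.trans (Finset.sum_congr rfl fun _ _ => (one_mul _).symm)

theorem stmt17 (m₁ n₁ m₂ n₂ : ℕ)
    (A₁ B₁ : Matrix (Fin m₁) (Fin n₁) ℝ) (A₂ B₂ : Matrix (Fin m₂) (Fin n₂) ℝ)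
    (hA₁ : ∀ i j, A₁ i j = 0 ∨ A₁ i j = 1) (hB₁ : ∀ i j, B₁ i j = 0 ∨ B₁ i j = 1)
    (hA₂ : ∀ i j, A₂ i j = 0 ∨ A₂ i j = 1) (hB₂ : ∀ i j, B₂ i j = 0 ∨ B₂ i j = 1)
    (h1 : A₁ * A₁ᵀ = B₁ * B₁ᵀ) (h1' : A₁ᵀ * A₁ = B₁ᵀ * B₁) (hne₁ : A₁ ≠ B₁)
    (h2 : A₂ * A₂ᵀ = B₂ * B₂ᵀ) (h2' : A₂ᵀ * A₂ = B₂ᵀ * B₂) (hne₂ : A₂ ≠ B₂) :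
    (let A := Matrix.fromBlocks A₁ 0 0 A₂
     let B := Matrix.fromBlocks B₁ 0 0 B₂
     A * Aᵀ = B * Bᵀ ∧ Aᵀ * A = Bᵀ * B ∧ A ≠ B) ∧
    (let A := Matrix.fromBlocks A₁ (Matrix.of fun _ _ => 1) (Matrix.of fun _ _ => 1) A₂
     let B := Matrix.fromBlocks B₁ (Matrix.of fun _ _ => 1) (Matrix.of fun _ _ => 1) B₂
     A * Aᵀ = B * Bᵀ ∧ Aᵀ * A = Bᵀ * B ∧ A ≠ B) := by
  have hA₁t : ∀ i j, A₁ᵀ i j = 0 ∨ A₁ᵀ i j = 1 := fun i j => hA₁ j i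
  have hB₁t : ∀ i j, B₁ᵀ i j = 0 ∨ B₁ᵀ i j = 1 := fun i j => hB₁ j i
  have hA₂t : ∀ i j, A₂ᵀ i j = 0 ∨ A₂ᵀ i j = 1 := fun i j => hA₂ j i
  have hB₂t : ∀ i j, B₂ᵀ i j = 0 ∨ B₂ᵀ i j = 1 := fun i j => hB₂ j i
  have h1t : A₁ᵀ * A₁ᵀᵀ = B₁ᵀ * B₁ᵀᵀ := by simpa using h1'
  have h2t : A₂ᵀ * A₂ᵀᵀ = B₂ᵀ * B₂ᵀᵀ := by simpa using h2'
  have honesT : ∀ {a b : ℕ},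
      ((Matrix.of fun _ _ => (1:ℝ)) : Matrix (Fin a) (Fin b) ℝ)ᵀ
        = (Matrix.of fun _ _ => (1:ℝ)) := by intro a b; ext i j; simp
  have hneblock : ∀ {a b : Fin m₁ → Fin n₁ → ℝ} {c d : Fin m₂ → Fin n₂ → ℝ}
      {X Y : Matrix (Fin m₁) (Fin n₂) ℝ} {Z W : Matrix (Fin m₂) (Fin n₁) ℝ},
      (a : Matrix (Fin m₁) (Fin n₁) ℝ) ≠ b →
      Matrix.fromBlocks (a : Matrix (Fin m₁) (Fin n₁) ℝ) X Z c ≠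
        Matrix.fromBlocks b Y W d := by
    intro a b c d X Y Z W hab h
    apply hab
    ext i j
    have := congrFun (congrFun h (Sum.inl i)) (Sum.inl j)
    simpa [Matrix.fromBlocks] using this
  refine ⟨⟨?_, ?_, hneblock hne₁⟩, ⟨?_, ?_, hneblock hne₁⟩⟩
  · simp [Matrix.fromBlocks_transpose, Matrix.fromBlocks_multiply, h1, h2]
  · simp [Matrix.fromBlocks_transpose, Matrix.fromBlocks_multiply, h1', h2']
  · simp only [Matrix.fromBlocks_transpose, Matrix.fromBlocks_multiply, honesT]
    rw [mul_ones_eq A₁ B₁ hA₁ hB₁ h1, ones_mul_eq A₂ B₂ hA₂ hB₂ h2,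
        ones_mul_eq A₁ B₁ hA₁ hB₁ h1, mul_ones_eq A₂ B₂ hA₂ hB₂ h2, h1, h2]
    rfl
  · simp only [Matrix.fromBlocks_transpose, Matrix.fromBlocks_multiply, honesT]
    rw [mul_ones_eq A₁ᵀ B₁ᵀ hA₁t hB₁t h1t, ones_mul_eq' A₂ B₂ hA₂ hB₂ h2',
        ones_mul_eq' A₁ B₁ hA₁ hB₁ h1', mul_ones_eq A₂ᵀ B₂ᵀ hA₂t hB₂t h2t,
        h1', h2']
    rfl
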